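/- arXiv:2007.10834 — 5 statements merged into one kernel-verified Lean document; each statement's English description precedes it below -/
import Mathlib

section
/- Let 0 < γ₁ < γ₂ with γ₁γ₂ = 2δ/(λm₂) and γ₂ − γ₁ = 2θm₁/m₂ (λ, θ, δ, m₁, m₂ > 0), and let b_D = (2/(γ₁+γ₂))·ln(γ₂/γ₁). Define V_D(x) = (1/(γ₁+γ₂))(γ₁/γ₂)^{(γ₁−γ₂)/(γ₁+γ₂)}(e^{γ₁x} − e^{−γ₂x}) on [0,b_D] and V_D(x) = θλm₁/δ + (x − b_D) for x > b_D. Then V_D(x) > x for all x > 0. -/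
open Real

lemma aux_two_log_lt (t : ℝ) (ht : 1 < t) : 2 * Real.log t < t - t⁻¹ := by
  have ht0 : (0:ℝ) < t := lt_trans one_pos ht
  have hmono : StrictMonoOn (fun u : ℝ => u - u⁻¹ - 2 * Real.log u) (Set.Ici 1) := by
    apply strictMonoOn_of_deriv_pos (convex_Ici 1)
    · apply ContinuousOn.sub
      · apply ContinuousOn.sub continuousOn_id
        exact ContinuousOn.inv₀ continuousOn_id
          (fun u hu => by have : (1:ℝ) ≤ u := hu; positivity)
      · exact continuousOn_const.mul (Real.continuousOn_log.mono
          (fun u hu => by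
            have : (1:ℝ) ≤ u := hu
            simp only [Set.mem_compl_iff, Set.mem_singleton_iff]
            positivity))
    · intro u hu
      rw [interior_Ici] at hu
      have hu1 : (1:ℝ) < u := hu
      have hu0 : (0:ℝ) < u := lt_trans one_pos hu1
      have hune : u ≠ 0 := ne_of_gt hu0
      have hd : HasDerivAt (fun u : ℝ => u - u⁻¹ - 2 * Real.log u)
          (1 - (-(u^2)⁻¹) - 2 * u⁻¹) u :=
        ((hasDerivAt_id u).sub (hasDerivAt_inv hune)).sub
          ((Real.hasDerivAt_log hune).const_mul 2)
      rw [hd.deriv]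
      have h1 : u⁻¹ < 1 := by
        rw [inv_lt_one_iff₀]; right; exact hu1
      have h2 : ((u:ℝ)^2)⁻¹ = u⁻¹ * u⁻¹ := by rw [sq, mul_inv]
      nlinarith [mul_pos (sub_pos.mpr h1) (sub_pos.mpr h1)]
  have key := hmono Set.self_mem_Ici (Set.mem_Ici.mpr ht.le) ht
  simp only [Real.log_one, inv_one] at key
  linarith

theorem VD_gt_x (lam th del m1 m2 : ℝ)
    (hlam : 0 < lam) (hth : 0 < th) (hdel : 0 < del) (hm1 : 0 < m1) (hm2 : 0 < m2)
    (g1 g2 : ℝ) (hg1 : 0 < g1) (hg12 : g1 < g2)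
    (hprod : g1 * g2 = 2 * del / (lam * m2))
    (hdiff : g2 - g1 = 2 * th * m1 / m2)
    (bD : ℝ) (hbD : bD = (2 / (g1 + g2)) * Real.log (g2 / g1))
    (VD : ℝ → ℝ)
    (hVD : ∀ x, VD x = if x ≤ bD then
        (1 / (g1 + g2)) * (g1 / g2) ^ ((g1 - g2) / (g1 + g2)) *
          (Real.exp (g1 * x) - Real.exp (-g2 * x))
      else th * lam * m1 / del + (x - bD)) :
    ∀ x > 0, VD x > x := by
  have hg2 : 0 < g2 := lt_trans hg1 hg12
  have hs : 0 < g1 + g2 := by linarith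
  have hsne : g1 + g2 ≠ 0 := ne_of_gt hs
  have hg1ne : g1 ≠ 0 := ne_of_gt hg1
  have hg2ne : g2 ≠ 0 := ne_of_gt hg2
  set r : ℝ := g2 / g1 with hrdef
  have hr1 : 1 < r := (one_lt_div hg1).mpr hg12
  have hr0 : 0 < r := lt_trans one_pos hr1
  have hL : 0 < Real.log r := Real.log_pos hr1
  have hbD0 : 0 < bD := by
    rw [hbD]; positivity
  set C : ℝ := (1 / (g1 + g2)) * (g1 / g2) ^ ((g1 - g2) / (g1 + g2)) with hCdef
  have hC0 : 0 < C := by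
    have := Real.rpow_pos_of_pos (div_pos hg1 hg2) ((g1 - g2) / (g1 + g2))
    positivity
  -- key exponential identities at bD
  have hK : (g1 / g2) ^ ((g1 - g2) / (g1 + g2))
      = Real.exp (((g2 - g1) / (g1 + g2)) * Real.log r) := by
    have h1 : g1 / g2 = r⁻¹ := by rw [hrdef, inv_div]
    rw [h1, Real.inv_rpow hr0.le, ← Real.rpow_neg hr0.le,
      Real.rpow_def_of_pos hr0]
    ring_nf
  have hE1 : C * g1 * Real.exp (g1 * bD) = g2 / (g1 + g2) := by
    rw [hCdef, hK, hbD]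
    rw [show g1 * (2 / (g1 + g2) * Real.log r) = (2 * g1 / (g1 + g2)) * Real.log r by ring]
    rw [show (1 / (g1 + g2) * Real.exp ((g2 - g1) / (g1 + g2) * Real.log r)) * g1 *
        Real.exp (2 * g1 / (g1 + g2) * Real.log r)
        = (g1 / (g1 + g2)) * Real.exp ((g2 - g1) / (g1 + g2) * Real.log r
            + 2 * g1 / (g1 + g2) * Real.log r) by rw [Real.exp_add]; ring]
    have he : (g2 - g1) / (g1 + g2) * Real.log r + 2 * g1 / (g1 + g2) * Real.log r
        = Real.log r := by field_simp; ring
    rw [he, Real.exp_log hr0, hrdef]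
    field_simp
  have hE2 : C * g2 * Real.exp (-g2 * bD) = g1 / (g1 + g2) := by
    rw [hCdef, hK, hbD]
    rw [show (-g2) * (2 / (g1 + g2) * Real.log r) = (-(2 * g2) / (g1 + g2)) * Real.log r by ring]
    rw [show (1 / (g1 + g2) * Real.exp ((g2 - g1) / (g1 + g2) * Real.log r)) * g2 *
        Real.exp (-(2 * g2) / (g1 + g2) * Real.log r)
        = (g2 / (g1 + g2)) * Real.exp ((g2 - g1) / (g1 + g2) * Real.log r
            + -(2 * g2) / (g1 + g2) * Real.log r) by rw [Real.exp_add]; ring]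
    have he : (g2 - g1) / (g1 + g2) * Real.log r + -(2 * g2) / (g1 + g2) * Real.log r
        = -Real.log r := by field_simp; ring
    rw [he, Real.exp_neg, Real.exp_log hr0, hrdef]
    field_simp
  intro x hx
  rcases le_or_gt x bD with hx2 | hx2
  · -- exponential part
    set F : ℝ → ℝ := fun z => C * (Real.exp (g1 * z) - Real.exp (-g2 * z)) - z with hF
    have hD : ∀ y : ℝ, HasDerivAt F
        (C * (Real.exp (g1 * y) * g1 - Real.exp (-g2 * y) * (-g2)) - 1) y := by
      intro y
      have h0 : HasDerivAt (fun z : ℝ => z) 1 y := hasDerivAt_id y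
      have h1 := h0.const_mul g1
      have h2 := h0.const_mul (-g2)
      have hmain := ((h1.exp.sub h2.exp).const_mul C).sub h0
      have heq : C * (Real.exp (g1 * y) * (g1 * 1) - Real.exp (-g2 * y) * (-g2 * 1)) - 1
          = C * (Real.exp (g1 * y) * g1 - Real.exp (-g2 * y) * (-g2)) - 1 := by ring
      rw [heq] at hmain
      exact hmain
    have hmono : StrictMonoOn F (Set.Icc 0 bD) := by
      apply strictMonoOn_of_deriv_pos (convex_Icc 0 bD)
      · exact (Continuous.continuousOn (by fun_prop))
      · intro y hy
        rw [interior_Icc] at hy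
        rw [(hD y).deriv]
        set u : ℝ := y - bD with hu
        have hu0 : u < 0 := by simp [hu]; linarith [hy.2]
        have hune1 : g1 * u ≠ 0 := by
          apply mul_ne_zero hg1ne (ne_of_lt hu0)
        have hune2 : -g2 * u ≠ 0 := by
          apply mul_ne_zero (neg_ne_zero.mpr hg2ne) (ne_of_lt hu0)
        have hx1 : C * Real.exp (g1 * y) * g1 = (g2 / (g1 + g2)) * Real.exp (g1 * u) := by
          rw [show g1 * y = g1 * bD + g1 * u by rw [hu]; ring, Real.exp_add, ← hE1]; ring
        have hx2' : C * Real.exp (-g2 * y) * g2 = (g1 / (g1 + g2)) * Real.exp (-g2 * u) := by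
          rw [show -g2 * y = -g2 * bD + -g2 * u by rw [hu]; ring, Real.exp_add, ← hE2]; ring
        have e1 : g1 * u + 1 < Real.exp (g1 * u) := Real.add_one_lt_exp hune1
        have e2 : -g2 * u + 1 < Real.exp (-g2 * u) := Real.add_one_lt_exp hune2
        have p1 : 0 < g2 / (g1 + g2) := by positivity
        have p2 : 0 < g1 / (g1 + g2) := by positivity
        have key : (g2 / (g1 + g2)) * (g1 * u + 1) + (g1 / (g1 + g2)) * (-g2 * u + 1) = 1 := by
          field_simp; ring
        have t1 := mul_lt_mul_of_pos_left e1 p1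
        have t2 := mul_lt_mul_of_pos_left e2 p2
        have expand : C * (Real.exp (g1 * y) * g1 - Real.exp (-g2 * y) * (-g2)) - 1
            = (g2 / (g1 + g2)) * Real.exp (g1 * u) + (g1 / (g1 + g2)) * Real.exp (-g2 * u) - 1 := by
          rw [← hx1, ← hx2']; ring
        rw [expand]
        linarith
    have hF0 : F 0 = 0 := by simp [hF]
    have := hmono (Set.mem_Icc.mpr ⟨le_refl 0, hbD0.le⟩) (Set.mem_Icc.mpr ⟨hx.le, hx2⟩) hx
    rw [hF0] at this
    rw [hVD x, if_pos hx2]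
    have : 0 < C * (Real.exp (g1 * x) - Real.exp (-g2 * x)) - x := this
    linarith
  · -- linear part
    have A' : g1 * g2 * (lam * m2) = 2 * del := by
      rw [hprod]; field_simp
    have B' : (g2 - g1) * m2 = 2 * th * m1 := by
      rw [hdiff]; field_simp
    have hval : th * lam * m1 / del = (g2 - g1) / (g1 * g2) := by
      rw [div_eq_div_iff hdel.ne' (by positivity : (g1 * g2 : ℝ) ≠ 0)]
      have hm : m2 * (th * lam * m1 * (g1 * g2)) = m2 * ((g2 - g1) * del) := by
        linear_combination (th * m1) * A' - del * B'
      exact mul_left_cancel₀ hm2.ne' hm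
    have hlog := aux_two_log_lt r hr1
    have hbDlt : bD < (g2 - g1) / (g1 * g2) := by
      have h2 : bD = (1 / (g1 + g2)) * (2 * Real.log r) := by rw [hbD]; ring
      have h3 : (1 / (g1 + g2)) * (2 * Real.log r) < (1 / (g1 + g2)) * (r - r⁻¹) :=
        mul_lt_mul_of_pos_left hlog (by positivity)
      have h4 : (1 / (g1 + g2)) * (r - r⁻¹) = (g2 - g1) / (g1 * g2) := by
        rw [hrdef]; field_simp; ring
      rw [h2]; rw [h4] at h3; exact h3
    rw [hVD x, if_neg (not_le.mpr hx2)]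
    have hfin : bD < th * lam * m1 / del := by rw [hval]; exact hbDlt
    linarith
end

section
/- Under the hypotheses of the previous statement, the strict inequality θλm₁/δ > b_D holds, where b_D = (2/(γ₁+γ₂))·ln(γ₂/γ₁). -/
open Real

lemma two_log_lt (t : ℝ) (ht : 1 < t) : 2 * Real.log t < t - 1/t := by
  have h0 : (0:ℝ) < t := by linarith
  have hmono : StrictMonoOn (fun x : ℝ => x - 1/x - 2 * Real.log x) (Set.Ici 1) := by
    apply strictMonoOn_of_deriv_pos (convex_Ici 1)
    · apply ContinuousOn.sub
      apply ContinuousOn.sub continuousOn_id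
      · exact continuousOn_const.div continuousOn_id
          (fun x hx => ne_of_gt (lt_of_lt_of_le one_pos hx))
      · exact continuousOn_const.mul (Real.continuousOn_log.mono (fun x hx => by
          simp only [Set.mem_Ici] at hx; simp; intro h; linarith))
    · intro x hx
      rw [interior_Ici] at hx
      have hx1 : 1 < x := hx
      have hxne : x ≠ 0 := by positivity
      have hd : HasDerivAt (fun x : ℝ => x - 1/x - 2 * Real.log x)
          (1 - (-(x^2)⁻¹) - 2 * x⁻¹) x := by
        have h1 : HasDerivAt (fun x : ℝ => x) 1 x := hasDerivAt_id x
        have h2 : HasDerivAt (fun x : ℝ => 1/x) (-(x^2)⁻¹) x := by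
          simpa [one_div] using hasDerivAt_inv hxne
        have h3 : HasDerivAt (fun x : ℝ => 2 * Real.log x) (2 * x⁻¹) x :=
          (Real.hasDerivAt_log hxne).const_mul 2
        exact (h1.sub h2).sub h3
      rw [hd.deriv]
      have : 1 - (-(x^2)⁻¹) - 2 * x⁻¹ = (1 - x⁻¹)^2 := by
        field_simp; ring
      rw [this]
      have h4 : 0 < 1 - x⁻¹ := by
        have : x⁻¹ < 1 := by rw [inv_lt_one_iff₀]; right; exact hx1
        linarith
      positivity
  have := hmono (Set.self_mem_Ici) (by simp only [Set.mem_Ici]; linarith : t ∈ Set.Ici 1) ht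
  simp only [Real.log_one] at this
  norm_num at this
  rw [one_div]
  linarith

theorem perpetuity_gt_barrier (lam th del m1 m2 : ℝ)
    (hlam : 0 < lam) (hth : 0 < th) (hdel : 0 < del) (hm1 : 0 < m1) (hm2 : 0 < m2)
    (g1 g2 : ℝ) (hg1 : 0 < g1) (hg12 : g1 < g2)
    (hprod : g1 * g2 = 2 * del / (lam * m2))
    (hdiff : g2 - g1 = 2 * th * m1 / m2)
    (bD : ℝ) (hbD : bD = (2 / (g1 + g2)) * Real.log (g2 / g1)) :
    th * lam * m1 / del > bD := by
  have hg2 : 0 < g2 := lt_trans hg1 hg12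
  have ht : 1 < g2 / g1 := (one_lt_div hg1).mpr hg12
  have hlog := two_log_lt (g2 / g1) ht
  have hsum : 0 < g1 + g2 := by linarith
  -- del = g1*g2*lam*m2/2
  have hdel' : del = g1 * g2 * lam * m2 / 2 := by
    have hlm : lam * m2 ≠ 0 := by positivity
    field_simp at hprod
    linarith
  have hth' : th * m1 = (g2 - g1) * m2 / 2 := by
    have : m2 ≠ 0 := by positivity
    field_simp at hdiff
    linarith
  -- th * lam * m1 / del = (g2 - g1)/(g1*g2)
  have hval : th * lam * m1 / del = (g2 - g1) / (g1 * g2) := by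
    rw [hdel', div_eq_div_iff (by positivity) (by positivity)]
    linear_combination (g1 * g2 * lam) * hth'
  rw [hval, hbD]
  have key : (2 / (g1 + g2)) * Real.log (g2 / g1) < (2 / (g1 + g2)) * ((g2/g1 - g1/g2)/2) := by
    apply mul_lt_mul_of_pos_left _ (by positivity)
    have : 1 / (g2 / g1) = g1 / g2 := by
      field_simp
    rw [this] at hlog
    linarith
  have heq : (2 / (g1 + g2)) * ((g2/g1 - g1/g2)/2) = (g2 - g1) / (g1 * g2) := by
    field_simp
    ring
  linarith [key, heq ▸ key]
end

section
/- Let 0 < γ₁ < γ₂ and b_D = (2/(γ₁+γ₂))·ln(γ₂/γ₁), and define V_D(x) = (e^{γ₁x} − e^{−γ₂x})/(γ₁ e^{γ₁b_D} + γ₂ e^{−γ₂b_D}) on [0, b_D]. Then V_D'(x) ≥ 1 for all x ∈ [0, b_D], with equality only at x = b_D; moreover V_D is strictly concave on [0,b_D]. -/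
open Real Set

theorem VD_deriv_ge_one_strict_concave (g1 g2 : ℝ) (hg1 : 0 < g1) (hg12 : g1 < g2)
    (bD : ℝ) (hbD : bD = (2 / (g1 + g2)) * Real.log (g2 / g1))
    (VD : ℝ → ℝ)
    (hVD : ∀ x, VD x = (Real.exp (g1 * x) - Real.exp (-g2 * x)) /
      (g1 * Real.exp (g1 * bD) + g2 * Real.exp (-g2 * bD))) :
    (∀ x ∈ Icc (0:ℝ) bD, 1 ≤ deriv VD x) ∧
    (∀ x ∈ Icc (0:ℝ) bD, deriv VD x = 1 → x = bD) ∧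
    StrictConcaveOn ℝ (Icc (0:ℝ) bD) VD := by
  have hg2 : 0 < g2 := hg1.trans hg12
  have hsum : 0 < g1 + g2 := by linarith
  set C : ℝ := g1 * Real.exp (g1 * bD) + g2 * Real.exp (-g2 * bD) with hC
  have hCpos : 0 < C := by positivity
  have hbDpos : 0 < bD := by
    rw [hbD]
    have h1 : (1:ℝ) < g2 / g1 := (one_lt_div hg1).2 hg12
    have := Real.log_pos h1
    positivity
  -- the function F = numerator of deriv
  set F : ℝ → ℝ := fun x => g1 * Real.exp (g1 * x) + g2 * Real.exp (-g2 * x) with hF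
  have hVDeq : VD = fun x => (Real.exp (g1 * x) - Real.exp (-g2 * x)) / C := funext hVD
  have hDF : ∀ x : ℝ, HasDerivAt VD (F x / C) x := by
    intro x
    have h1 : HasDerivAt (fun x => Real.exp (g1 * x)) (Real.exp (g1 * x) * g1) x := by
      simpa using ((hasDerivAt_id x).const_mul g1).exp
    have h2 : HasDerivAt (fun x => Real.exp (-g2 * x)) (Real.exp (-g2 * x) * (-g2)) x := by
      simpa using ((hasDerivAt_id x).const_mul (-g2)).exp
    have := (h1.sub h2).div_const C
    rw [hVDeq]
    refine this.congr_deriv ?_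
    show _ = (g1 * Real.exp (g1 * x) + g2 * Real.exp (-g2 * x)) / C
    ring
  have hderiv : ∀ x : ℝ, deriv VD x = F x / C := fun x => (hDF x).deriv
  -- F is strictly antitone on Icc 0 bD
  have hDFF : ∀ x : ℝ, HasDerivAt F (g1 * (Real.exp (g1 * x) * g1) + g2 * (Real.exp (-g2 * x) * (-g2))) x := by
    intro x
    have h1 : HasDerivAt (fun x => Real.exp (g1 * x)) (Real.exp (g1 * x) * g1) x := by
      simpa using ((hasDerivAt_id x).const_mul g1).exp
    have h2 : HasDerivAt (fun x => Real.exp (-g2 * x)) (Real.exp (-g2 * x) * (-g2)) x := by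
      simpa using ((hasDerivAt_id x).const_mul (-g2)).exp
    exact (h1.const_mul g1).add (h2.const_mul g2)
  have hbDmul : (g1 + g2) * bD = 2 * Real.log (g2 / g1) := by
    rw [hbD]; field_simp
  have hFanti : StrictAntiOn F (Icc 0 bD) := by
    apply strictAntiOn_of_deriv_neg (convex_Icc 0 bD)
    · exact Continuous.continuousOn (by fun_prop)
    · intro x hx
      rw [interior_Icc] at hx
      rw [(hDFF x).deriv]
      have hkey : g1 ^ 2 * Real.exp (g1 * x) < g2 ^ 2 * Real.exp (-g2 * x) := by
        have hlt : (g1 + g2) * x < 2 * Real.log (g2 / g1) := by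
          rw [← hbDmul]
          exact (mul_lt_mul_iff_right₀ hsum).2 hx.2
        have h2 : Real.exp ((g1 + g2) * x) < (g2 / g1) ^ 2 := by
          have : Real.exp ((g1 + g2) * x) < Real.exp (2 * Real.log (g2 / g1)) :=
            Real.exp_lt_exp.2 hlt
          calc Real.exp ((g1 + g2) * x) < Real.exp (2 * Real.log (g2 / g1)) := this
            _ = (g2 / g1) ^ 2 := by
                rw [mul_comm, Real.exp_mul, Real.exp_log (by positivity)]
                norm_num
        have h3 : g1 ^ 2 * Real.exp ((g1 + g2) * x) < g2 ^ 2 := by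
          have := (mul_lt_mul_iff_right₀ (show (0:ℝ) < g1 ^ 2 by positivity)).2 h2
          calc g1 ^ 2 * Real.exp ((g1 + g2) * x) < g1 ^ 2 * (g2 / g1) ^ 2 := this
            _ = g2 ^ 2 := by field_simp
        have h4 := (mul_lt_mul_iff_left₀ (show (0:ℝ) < Real.exp (-g2 * x) by positivity)).2 h3
        calc g1 ^ 2 * Real.exp (g1 * x)
            = g1 ^ 2 * Real.exp ((g1 + g2) * x) * Real.exp (-g2 * x) := by
              rw [mul_assoc, ← Real.exp_add]; ring_nf
          _ < g2 ^ 2 * Real.exp (-g2 * x) := h4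
      nlinarith [Real.exp_pos (g1 * x), Real.exp_pos (-g2 * x)]
  have hFbD : F bD = C := rfl
  have hgt : ∀ x ∈ Icc (0:ℝ) bD, x < bD → 1 < deriv VD x := by
    intro x hx hxlt
    rw [hderiv]
    rw [lt_div_iff₀ hCpos, one_mul, ← hFbD]
    exact hFanti hx (right_mem_Icc.2 hbDpos.le) hxlt
  refine ⟨?_, ?_, ?_⟩
  · intro x hx
    rcases lt_or_eq_of_le hx.2 with h | h
    · exact (hgt x hx h).le
    · rw [hderiv, h, hFbD, div_self hCpos.ne']
  · intro x hx heq
    by_contra hne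
    exact absurd heq (ne_of_gt (hgt x hx (lt_of_le_of_ne hx.2 hne)))
  · apply StrictAntiOn.strictConcaveOn_of_deriv (convex_Icc 0 bD)
    · rw [hVDeq]
      exact Continuous.continuousOn (by fun_prop)
    · rw [interior_Icc]
      intro x hx y hy hxy
      rw [hderiv, hderiv, div_lt_div_iff_of_pos_right hCpos]
      exact hFanti (Ioo_subset_Icc_self hx) (Ioo_subset_Icc_self hy) hxy
end

section
/- Fix n ≥ 1, λ, θ, δ > 0, a positive random variable Y with distribution F_Y, and b_D > 0. Define the operator G_n on C¹ functions by G_n(x,u) = (nλ+δ)u(x) − λ(√n+θ)E[Y]u'(x) − nλ∫₀^{√n x} u(x − t/√n) dF_Y(t). Suppose u, v ∈ C¹([0,b_D]) satisfy (i) u(0) ≤ v(0), (ii) G_n(x,u) ≤ G_n(x,v) for all x ∈ (0,b_D], and (iii) u'(b_D) = v'(b_D). Then u(x) ≤ v(x) for all x ∈ [0, b_D]. -/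
open Real MeasureTheory Set

/-- The scaled integro-differential operator `G_n` of the dividend problem:
`G_n(x,u) = (nλ+δ)u(x) − λ(√n+θ)E[Y]u'(x) − nλ∫₀^{√n x} u(x − t/√n) dF_Y(t)`,
where `μ` is the law of the claim `Y`. -/
noncomputable def Gop (n lam th del : ℝ) (μ : Measure ℝ) (u : ℝ → ℝ) (x : ℝ) : ℝ :=
  (n * lam + del) * u x - lam * (Real.sqrt n + th) * (∫ y, y ∂μ) * deriv u x
    - n * lam * ∫ t in Ioc 0 (Real.sqrt n * x), u (x - t / Real.sqrt n) ∂μ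

theorem comparison_lemma (n lam th del : ℝ) (hn : 1 ≤ n)
    (hlam : 0 < lam) (hth : 0 < th) (hdel : 0 < del)
    (μ : Measure ℝ) [IsProbabilityMeasure μ] (hpos : ∀ᵐ y ∂μ, 0 < y)
    (bD : ℝ) (hbD : 0 < bD)
    (u v : ℝ → ℝ) (hu : ContDiff ℝ 1 u) (hv : ContDiff ℝ 1 v)
    (h0 : u 0 ≤ v 0)
    (hG : ∀ x ∈ Ioc (0:ℝ) bD, Gop n lam th del μ u x ≤ Gop n lam th del μ v x)
    (hderiv : deriv u bD = deriv v bD) :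
    ∀ x ∈ Icc (0:ℝ) bD, u x ≤ v x := by
  intro x hx
  by_contra hcon
  push_neg at hcon
  have hw : Continuous (fun x => u x - v x) := hu.continuous.sub hv.continuous
  obtain ⟨x₀, hx₀, hmax⟩ :=
    isCompact_Icc.exists_isMaxOn (nonempty_Icc.2 hbD.le) hw.continuousOn
  have hwx₀ : 0 < u x₀ - v x₀ := lt_of_lt_of_le (sub_pos.2 hcon) (hmax hx)
  have hsn : (0:ℝ) < Real.sqrt n := Real.sqrt_pos.2 (lt_of_lt_of_le one_pos hn)
  have hx₀pos : 0 < x₀ := by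
    rcases hx₀.1.lt_or_eq with h | h
    · exact h
    · exfalso; rw [← h] at hwx₀; linarith
  have hD : deriv u x₀ = deriv v x₀ := by
    rcases lt_or_eq_of_le hx₀.2 with h | h
    · have hloc : IsLocalMax (fun x => u x - v x) x₀ :=
        hmax.isLocalMax (Icc_mem_nhds hx₀pos h)
      have hz := hloc.deriv_eq_zero
      have hdu : DifferentiableAt ℝ u x₀ := (hu.differentiable one_ne_zero).differentiableAt
      have hdv : DifferentiableAt ℝ v x₀ := (hv.differentiable one_ne_zero).differentiableAt
      rw [deriv_fun_sub hdu hdv] at hz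
      linarith
    · rw [h]; exact hderiv
  set S := Ioc 0 (Real.sqrt n * x₀) with hSdef
  have integr : ∀ f : ℝ → ℝ, Continuous f →
      Integrable (fun t => f (x₀ - t / Real.sqrt n)) (μ.restrict S) := by
    intro f hf
    have hg : Continuous (fun t => f (x₀ - t / Real.sqrt n)) := by continuity
    obtain ⟨C, hC⟩ := (isCompact_Icc (a := (0:ℝ))
      (b := Real.sqrt n * x₀)).exists_bound_of_continuousOn hg.continuousOn
    refine Integrable.mono' (integrable_const C) hg.aestronglyMeasurable ?_
    filter_upwards [ae_restrict_mem measurableSet_Ioc] with t ht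
    exact hC t ⟨ht.1.le, ht.2⟩
  have hIu := integr u hu.continuous
  have hIv := integr v hv.continuous
  have hIw : Integrable
      (fun t => u (x₀ - t / Real.sqrt n) - v (x₀ - t / Real.sqrt n)) (μ.restrict S) :=
    hIu.sub hIv
  have hbound : ∫ t in S, (u (x₀ - t / Real.sqrt n) - v (x₀ - t / Real.sqrt n)) ∂μ
      ≤ u x₀ - v x₀ := by
    have h1 : ∫ t in S, (u (x₀ - t / Real.sqrt n) - v (x₀ - t / Real.sqrt n)) ∂μ
        ≤ ∫ _t in S, (u x₀ - v x₀) ∂μ := by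
      refine setIntegral_mono_on hIw (integrable_const _) measurableSet_Ioc ?_
      intro t ht
      refine hmax ⟨?_, ?_⟩
      · have h2 : t / Real.sqrt n ≤ x₀ := by
          rw [div_le_iff₀ hsn]
          calc t ≤ Real.sqrt n * x₀ := ht.2
            _ = x₀ * Real.sqrt n := mul_comm _ _
        linarith
      · have : 0 < t / Real.sqrt n := div_pos ht.1 hsn
        linarith [hx₀.2]
    have h2 : ∫ _t in S, (u x₀ - v x₀) ∂μ = (μ S).toReal * (u x₀ - v x₀) := by
      rw [setIntegral_const, smul_eq_mul]
      rfl
    have h3 : (μ S).toReal ≤ 1 := by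
      have hle := ENNReal.toReal_mono ENNReal.one_ne_top (prob_le_one (μ := μ) (s := S))
      simpa using hle
    have h4 : (0:ℝ) ≤ (μ S).toReal := ENNReal.toReal_nonneg
    nlinarith
  have hGx := hG x₀ ⟨hx₀pos, hx₀.2⟩
  unfold Gop at hGx
  rw [hD] at hGx
  have heq : (∫ t in S, u (x₀ - t / Real.sqrt n) ∂μ)
      - (∫ t in S, v (x₀ - t / Real.sqrt n) ∂μ)
      = ∫ t in S, (u (x₀ - t / Real.sqrt n) - v (x₀ - t / Real.sqrt n)) ∂μ :=
    (integral_sub hIu hIv).symm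
  have hnl : (0:ℝ) ≤ n * lam := mul_nonneg (by linarith) hlam.le
  nlinarith [hGx, hbound, heq, hwx₀]
end

section
/- With r₁(n), r₂(n) as in the previous statement and b_n = (1/(r₁+r₂))·ln( r₂²(√n − r₂) / (r₁²(√n + r₁)) ), one has lim_{n→∞} b_n = (2/(γ₁+γ₂))·ln(γ₂/γ₁) = b_D, where γ₁ = (1/2)(√(θ²+4δ/λ) − θ) and γ₂ = (1/2)(√(θ²+4δ/λ) + θ). Moreover, there exists a constant C > 0 such that |b_n − b_D| ≤ C/√n for all sufficiently large n. -/
open Real Filter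

noncomputable def Qf (th c D u : ℝ) : ℝ := Real.sqrt (D^2 + 2*th*c*u + c^2*u^2)
noncomputable def R1f (th c D u : ℝ) : ℝ := (Qf th c D u - th + c*u)/(2*(1+th*u))
noncomputable def R2f (th c D u : ℝ) : ℝ := (Qf th c D u + th - c*u)/(2*(1+th*u))
noncomputable def Fb (th c D u : ℝ) : ℝ :=
  ((1+th*u)/Qf th c D u) *
    Real.log (R2f th c D u ^ 2 * (1 - u * R2f th c D u)
      / (R1f th c D u ^ 2 * (1 + u * R1f th c D u)))

lemma Qf0 (th c D : ℝ) (hD : 0 ≤ D) : Qf th c D 0 = D := by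
  simp [Qf, Real.sqrt_sq hD]

lemma R1f0 (th c D : ℝ) (hD : 0 ≤ D) : R1f th c D 0 = (D - th)/2 := by
  unfold R1f; rw [Qf0 th c D hD]; ring_nf

lemma R2f0 (th c D : ℝ) (hD : 0 ≤ D) : R2f th c D 0 = (D + th)/2 := by
  unfold R2f; rw [Qf0 th c D hD]; ring_nf

lemma Fb_zero (th c D : ℝ) (hD : 0 ≤ D) :
    Fb th c D 0 = (2/D) * Real.log (((D+th)/2) / ((D-th)/2)) := by
  unfold Fb
  rw [Qf0 th c D hD, R1f0 th c D hD, R2f0 th c D hD]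
  have : ((D + th) / 2) ^ 2 * (1 - 0 * ((D + th) / 2)) /
      (((D - th) / 2) ^ 2 * (1 + 0 * ((D - th) / 2)))
      = (((D+th)/2) / ((D-th)/2)) ^ 2 := by
    simp only [zero_mul, sub_zero, add_zero, mul_one, div_pow]
  rw [this, Real.log_pow]
  push_cast
  ring

lemma Fb_diff (th c D : ℝ) (hth : 0 < th) (hD : th < D) :
    DifferentiableAt ℝ (fun u => Fb th c D u) 0 := by
  have hDpos : 0 < D := hth.trans hD
  have hq : DifferentiableAt ℝ (fun u => Qf th c D u) 0 := by
    apply DifferentiableAt.sqrt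
    · fun_prop
    · norm_num; positivity
  have hden : DifferentiableAt ℝ (fun u : ℝ => 2*(1+th*u)) 0 := by fun_prop
  have hdenne : (2*(1+th*(0:ℝ))) ≠ 0 := by norm_num
  have h1 : DifferentiableAt ℝ (fun u => R1f th c D u) 0 := by
    unfold R1f
    exact DifferentiableAt.div (by fun_prop (disch := assumption)) hden hdenne
  have h2 : DifferentiableAt ℝ (fun u => R2f th c D u) 0 := by
    unfold R2f
    exact DifferentiableAt.div (by fun_prop (disch := assumption)) hden hdenne
  have hGnum : DifferentiableAt ℝ (fun u => R2f th c D u ^ 2 * (1 - u * R2f th c D u)) 0 := by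
    fun_prop (disch := assumption)
  have hGden : DifferentiableAt ℝ (fun u => R1f th c D u ^ 2 * (1 + u * R1f th c D u)) 0 := by
    fun_prop (disch := assumption)
  have hGdenne : R1f th c D 0 ^ 2 * (1 + (0:ℝ) * R1f th c D 0) ≠ 0 := by
    rw [R1f0 th c D hDpos.le]
    have : (0:ℝ) < (D - th)/2 := by linarith
    simp only [zero_mul, add_zero]
    positivity
  have hG : DifferentiableAt ℝ (fun u => R2f th c D u ^ 2 * (1 - u * R2f th c D u)
      / (R1f th c D u ^ 2 * (1 + u * R1f th c D u))) 0 :=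
    hGnum.div hGden hGdenne
  have hG0ne : R2f th c D 0 ^ 2 * (1 - (0:ℝ) * R2f th c D 0)
      / (R1f th c D 0 ^ 2 * (1 + (0:ℝ) * R1f th c D 0)) ≠ 0 := by
    rw [R1f0 th c D hDpos.le, R2f0 th c D hDpos.le]
    have h1 : (0:ℝ) < (D - th)/2 := by linarith
    have h2 : (0:ℝ) < (D + th)/2 := by linarith
    simp only [zero_mul, add_zero, sub_zero, mul_one]
    positivity
  have hlog : DifferentiableAt ℝ (fun u => Real.log (R2f th c D u ^ 2 * (1 - u * R2f th c D u)
      / (R1f th c D u ^ 2 * (1 + u * R1f th c D u)))) 0 := hG.log hG0ne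
  have hfrac : DifferentiableAt ℝ (fun u : ℝ => (1+th*u)/Qf th c D u) 0 := by
    apply DifferentiableAt.div (by fun_prop) hq
    rw [Qf0 th c D hDpos.le]; exact hDpos.ne'
  exact hfrac.mul hlog

lemma sqrt_tendsto_atTop : Tendsto Real.sqrt atTop atTop := by
  apply tendsto_atTop_atTop.2
  intro b
  refine ⟨(max b 0)^2, fun a ha => ?_⟩
  calc b ≤ max b 0 := le_max_left _ _
    _ = Real.sqrt ((max b 0)^2) := (Real.sqrt_sq (le_max_right _ _)).symm
    _ ≤ Real.sqrt a := Real.sqrt_le_sqrt ha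

theorem barrier_convergence (lam th del : ℝ) (hlam : 0 < lam) (hth : 0 < th) (hdel : 0 < del)
    (r1 r2 b : ℝ → ℝ) (g1 g2 bD : ℝ)
    (hr1 : ∀ n > 0, r1 n = (Real.sqrt ((Real.sqrt n * lam * th + del) ^ 2 + 4 * n * del * lam)
        - (Real.sqrt n * lam * th - del)) / (2 * lam * (Real.sqrt n + th)))
    (hr2 : ∀ n > 0, r2 n = (Real.sqrt ((Real.sqrt n * lam * th + del) ^ 2 + 4 * n * del * lam)
        + (Real.sqrt n * lam * th - del)) / (2 * lam * (Real.sqrt n + th)))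
    (hb : ∀ n > 0, b n = (1 / (r1 n + r2 n)) *
        Real.log (r2 n ^ 2 * (Real.sqrt n - r2 n) / (r1 n ^ 2 * (Real.sqrt n + r1 n))))
    (hg1 : g1 = (1 / 2) * (Real.sqrt (th ^ 2 + 4 * del / lam) - th))
    (hg2 : g2 = (1 / 2) * (Real.sqrt (th ^ 2 + 4 * del / lam) + th))
    (hbD : bD = (2 / (g1 + g2)) * Real.log (g2 / g1)) :
    Tendsto b atTop (nhds bD) ∧
    ∃ C > 0, ∀ᶠ n in atTop, |b n - bD| ≤ C / Real.sqrt n := by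
  set c : ℝ := del / lam with hc
  set D : ℝ := Real.sqrt (th ^ 2 + 4 * del / lam) with hDdef
  have hcpos : 0 < c := div_pos hdel hlam
  have hD2 : D ^ 2 = th ^ 2 + 4 * del / lam := Real.sq_sqrt (by positivity)
  have hDgt : th < D := by
    rw [hDdef]
    rw [Real.lt_sqrt hth.le]
    have : 0 < 4 * del / lam := by positivity
    linarith
  have hDpos : 0 < D := hth.trans hDgt
  -- value at 0 equals bD
  have hF0 : Fb th c D 0 = bD := by
    rw [Fb_zero th c D hDpos.le, hbD, hg1, hg2]
    have hsum : (1/2) * (D - th) + (1/2) * (D + th) = D := by ring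
    rw [hsum, show (1:ℝ)/2*(D+th) = (D+th)/2 from by ring,
      show (1:ℝ)/2*(D-th) = (D-th)/2 from by ring]
  -- key identity: b n = Fb th c D (1/√n) for n > 0
  have key : ∀ n : ℝ, 0 < n → b n = Fb th c D (1 / Real.sqrt n) := by
    intro n hn
    have hs : 0 < Real.sqrt n := Real.sqrt_pos.2 hn
    set s : ℝ := Real.sqrt n with hsdef
    have hns : n = s ^ 2 := (Real.sq_sqrt hn.le).symm
    set u : ℝ := 1 / s with hu
    have hsu : s * u = 1 := by rw [hu]; field_simp
    have hupos : 0 < u := by positivity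
    have hQ : Real.sqrt ((s * lam * th + del) ^ 2 + 4 * n * del * lam)
        = lam * s * Qf th c D u := by
      have harg : (s * lam * th + del) ^ 2 + 4 * n * del * lam
          = (lam * s) ^ 2 * (D ^ 2 + 2 * th * c * u + c ^ 2 * u ^ 2) := by
        rw [hD2, hns, hu, hc]
        field_simp
        ring
      rw [harg, Real.sqrt_mul (by positivity), Real.sqrt_sq (by positivity)]
      rfl
    have hdenpos : (0:ℝ) < 1 + th * u := by positivity
    have hlsne : lam * s ≠ 0 := by positivity
    have hdel' : lam * s * (c * u) = del := by
      rw [hc, hu]; field_simp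
    have hsth : s + th = s * (1 + th * u) := by
      linear_combination -th * hsu
    have hr1' : r1 n = R1f th c D u := by
      rw [hr1 n hn, ← hsdef, hQ]
      unfold R1f
      rw [show lam * s * Qf th c D u - (s * lam * th - del)
          = (lam * s) * (Qf th c D u - th + c * u) by rw [← hdel']; ring]
      rw [show 2 * lam * (s + th) = (lam * s) * (2 * (1 + th * u)) by rw [hsth]; ring]
      rw [mul_div_mul_left _ _ hlsne]
    have hr2' : r2 n = R2f th c D u := by
      rw [hr2 n hn, ← hsdef, hQ]
      unfold R2f
      rw [show lam * s * Qf th c D u + (s * lam * th - del)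
          = (lam * s) * (Qf th c D u + th - c * u) by rw [← hdel']; ring]
      rw [show 2 * lam * (s + th) = (lam * s) * (2 * (1 + th * u)) by rw [hsth]; ring]
      rw [mul_div_mul_left _ _ hlsne]
    have hsum : r1 n + r2 n = Qf th c D u / (1 + th * u) := by
      rw [hr1', hr2']
      unfold R1f R2f
      rw [← add_div]
      rw [show Qf th c D u - th + c * u + (Qf th c D u + th - c * u)
          = 2 * Qf th c D u by ring]
      rw [mul_div_mul_left _ _ (two_ne_zero)]
    have hargeq : r2 n ^ 2 * (s - r2 n) / (r1 n ^ 2 * (s + r1 n))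
        = R2f th c D u ^ 2 * (1 - u * R2f th c D u)
          / (R1f th c D u ^ 2 * (1 + u * R1f th c D u)) := by
      rw [hr1', hr2']
      have hA : R2f th c D u ^ 2 * (s - R2f th c D u)
          = s * (R2f th c D u ^ 2 * (1 - u * R2f th c D u)) := by
        have : s - R2f th c D u = s * (1 - u * R2f th c D u) := by
          have : s * (1 - u * R2f th c D u) = s - (s * u) * R2f th c D u := by ring
          rw [this, hsu, one_mul]
        rw [this]; ring
      have hB : R1f th c D u ^ 2 * (s + R1f th c D u)
          = s * (R1f th c D u ^ 2 * (1 + u * R1f th c D u)) := by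
        have : s + R1f th c D u = s * (1 + u * R1f th c D u) := by
          have : s * (1 + u * R1f th c D u) = s + (s * u) * R1f th c D u := by ring
          rw [this, hsu, one_mul]
        rw [this]; ring
      rw [hA, hB, mul_div_mul_left _ _ hs.ne']
    rw [hb n hn, ← hsdef, hsum, hargeq, one_div_div]
    rfl
  -- big-O estimate
  have hdiff : DifferentiableAt ℝ (fun v => Fb th c D v) 0 := Fb_diff th c D hth hDgt
  have hO : (fun v => Fb th c D v - Fb th c D 0) =O[nhds 0] (fun v : ℝ => v) := by
    have := hdiff.isBigO_sub
    simpa using this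
  obtain ⟨C, hCbound⟩ := hO.bound
  have htend : Tendsto (fun n : ℝ => 1 / Real.sqrt n) atTop (nhds 0) := by
    have h1 : Tendsto (fun x : ℝ => x⁻¹) atTop (nhds 0) := tendsto_inv_atTop_zero
    have := h1.comp sqrt_tendsto_atTop
    simpa [one_div, Function.comp_def] using this
  constructor
  · have hcomp : Tendsto (fun n : ℝ => Fb th c D (1 / Real.sqrt n)) atTop (nhds bD) := by
      rw [← hF0]
      exact (hdiff.continuousAt.tendsto).comp htend
    apply hcomp.congr'
    filter_upwards [eventually_gt_atTop (0:ℝ)] with n hn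
    exact (key n hn).symm
  · refine ⟨max C 1, lt_of_lt_of_le one_pos (le_max_right _ _), ?_⟩
    have hev := htend.eventually hCbound
    filter_upwards [hev, eventually_gt_atTop (0:ℝ)] with n h1 h2
    have hs : 0 < Real.sqrt n := Real.sqrt_pos.2 h2
    rw [key n h2, ← hF0]
    have : ‖Fb th c D (1 / Real.sqrt n) - Fb th c D 0‖
        ≤ C * ‖(1 / Real.sqrt n : ℝ)‖ := h1
    rw [Real.norm_eq_abs, Real.norm_eq_abs] at this
    have habs : |(1 / Real.sqrt n : ℝ)| = 1 / Real.sqrt n := abs_of_pos (by positivity)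
    rw [habs] at this
    calc |Fb th c D (1 / Real.sqrt n) - Fb th c D 0| ≤ C * (1 / Real.sqrt n) := this
      _ ≤ max C 1 * (1 / Real.sqrt n) := by
          apply mul_le_mul_of_nonneg_right (le_max_left _ _) (by positivity)
      _ = max C 1 / Real.sqrt n := by ring
end
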